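/- Let (Ω, ℱ, (ℱ_t), ℙ) be a filtered probability space and p ∈ (1,∞). Let w > 0 be a uniformly integrable martingale weight with A_p characteristic Q_p(w) = sup_τ ‖E[w|ℱ_τ] E[w^{-1/(p-1)}|ℱ_τ]^{p-1}‖_∞ < ∞. For an integrable random variable X with martingale X_t = E[X|ℱ_t], the pointwise bound |X_t|^{p-1} ≤ Q_p(w) · E[w|ℱ_t]^{-1} · (E_u[|X| u^{-1} | ℱ_t])^{p-1} holds a.s. for all t, where u = w^{-1/(p-1)} and E_u denotes u-weighted conditional expectation E_u[f|ℱ_t] = E[f u|ℱ_t]/E[u|ℱ_t]. -/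

import Mathlib

open MeasureTheory
open scoped NNReal

lemma condexp_pos_aux {Ω : Type*} {m m0 : MeasurableSpace Ω} (hm : m ≤ m0) (μ : Measure Ω)
    [IsFiniteMeasure μ] {f : Ω → ℝ} (hf : Integrable f μ) (hpos : ∀ ω, 0 < f ω) :
    ∀ᵐ ω ∂μ, 0 < (μ[f|m]) ω := by
  set g := μ[f|m] with hg
  have hgm : StronglyMeasurable[m] g := stronglyMeasurable_condExp
  have hs_m : MeasurableSet[m] {ω | g ω ≤ 0} :=
    measurableSet_le hgm.measurable measurable_const
  have hs0 : μ {ω | g ω ≤ 0} = 0 := by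
    by_contra h
    have hμpos : 0 < μ {ω | g ω ≤ 0} := by
      exact lt_of_le_of_ne zero_le (Ne.symm h)
    have hposint : 0 < ∫ x in {ω | g ω ≤ 0}, f x ∂μ := by
      rw [setIntegral_pos_iff_support_of_nonneg_ae
        (Filter.Eventually.of_forall fun x => (hpos x).le) hf.integrableOn]
      have hsupp : Function.support f = Set.univ := by
        ext x; simp [Function.mem_support, (hpos x).ne']
      rwa [hsupp, Set.univ_inter]
    have heq : ∫ x in {ω | g ω ≤ 0}, g x ∂μ = ∫ x in {ω | g ω ≤ 0}, f x ∂μ :=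
      setIntegral_condExp hm hf hs_m
    have hnp : ∫ x in {ω | g ω ≤ 0}, g x ∂μ ≤ 0 :=
      setIntegral_nonpos (hm _ hs_m) fun x hx => hx
    linarith
  rw [ae_iff]
  convert hs0 using 2
  ext ω
  simp [not_lt]

theorem stmt12 {Ω : Type*} {m0 : MeasurableSpace Ω} (μ : Measure Ω) [IsProbabilityMeasure μ]
    (ℱ : Filtration ℝ≥0 m0) (p : ℝ) (hp : 1 < p)
    (w u : Ω → ℝ) (hwpos : ∀ ω, 0 < w ω)
    (hwmart : Martingale (fun t => μ[w|ℱ t]) ℱ μ)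
    (hwUI : UniformIntegrable (fun t => μ[w|ℱ t]) 1 μ)
    (hu : u = fun ω => w ω ^ (-(p - 1)⁻¹))
    (hwint : Integrable w μ) (huint : Integrable u μ)
    (Q : ℝ)
    (hQ : ∀ (τ : Ω → ℝ≥0) (hτ : IsStoppingTime ℱ (fun ω => (τ ω : WithTop ℝ≥0))),
      ∀ᵐ ω ∂μ, (μ[w|hτ.measurableSpace]) ω * ((μ[u|hτ.measurableSpace]) ω) ^ (p - 1) ≤ Q)
    (X : Ω → ℝ) (hXint : Integrable X μ) :
    ∀ t : ℝ≥0, ∀ᵐ ω ∂μ,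
      |(μ[X|ℱ t]) ω| ^ (p - 1) ≤
        Q * ((μ[w|ℱ t]) ω)⁻¹ *
          ((μ[fun ω' => (|X ω'| * (u ω')⁻¹) * u ω'|ℱ t]) ω / (μ[u|ℱ t]) ω) ^ (p - 1) := by
  intro t
  have hppos : (0:ℝ) < p - 1 := by linarith
  have hupos : ∀ ω, 0 < u ω := by
    intro ω; rw [hu]; exact Real.rpow_pos_of_pos (hwpos ω) _
  have hXsimp : (fun ω' => (|X ω'| * (u ω')⁻¹) * u ω') = fun ω' => |X ω'| := by
    funext ω'; exact inv_mul_cancel_right₀ (hupos ω').ne' _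
  rw [hXsimp]
  have hm := ℱ.le t
  have hW := condexp_pos_aux hm μ hwint hwpos
  have hU := condexp_pos_aux hm μ huint hupos
  have h1 := condExp_mono (μ := μ) (m := ℱ t) hXint hXint.abs
    (Filter.Eventually.of_forall fun ω => le_abs_self (X ω))
  have h2 := condExp_mono (μ := μ) (m := ℱ t) hXint.neg hXint.abs
    (Filter.Eventually.of_forall fun ω => neg_le_abs (X ω))
  have hneg := condExp_neg (μ := μ) (m := ℱ t) X
  have hQt := hQ (fun _ => t) (isStoppingTime_const ℱ t)
  rw [IsStoppingTime.measurableSpace_const] at hQt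
  filter_upwards [hW, hU, h1, h2, hneg, hQt] with ω hWω hUω h1ω h2ω hnegω hQω
  have habs : |(μ[X|ℱ t]) ω| ≤ (μ[fun ω' => abs (X ω')|ℱ t]) ω := by
    rw [abs_le]
    refine ⟨?_, h1ω⟩
    have h2' := h2ω
    rw [hnegω] at h2'
    simp only [Pi.neg_apply] at h2'
    linarith
  set E := (μ[fun ω' => abs (X ω')|ℱ t]) ω
  set W := (μ[w|ℱ t]) ω
  set U := (μ[u|ℱ t]) ω
  have hEnn : 0 ≤ E := le_trans (abs_nonneg _) habs
  have hUp : U ^ (p - 1) ≤ Q * W⁻¹ := by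
    rw [← div_eq_mul_inv, le_div_iff₀ hWω]
    nlinarith [hQω]
  calc |(μ[X|ℱ t]) ω| ^ (p - 1) ≤ E ^ (p - 1) :=
        Real.rpow_le_rpow (abs_nonneg _) habs hppos.le
    _ = (E / U) ^ (p - 1) * U ^ (p - 1) := by
        rw [← Real.mul_rpow (div_nonneg hEnn hUω.le) hUω.le, div_mul_cancel₀ _ hUω.ne']
    _ ≤ (E / U) ^ (p - 1) * (Q * W⁻¹) := by
        exact mul_le_mul_of_nonneg_left hUp (Real.rpow_nonneg (div_nonneg hEnn hUω.le) _)
    _ = Q * W⁻¹ * (E / U) ^ (p - 1) := mul_comm _ _
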